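/- Let s > 0. Define T(z) = −s + √(s² + z²) and ε(z) = z/√(s² + z²), and define G : (0,∞) × ℝ × ℝ → ℝ⁴ by G(t, a, z) = (T(z) + t, t√(1 − ε(z)²) cos a, t√(1 − ε(z)²) sin a, z + t ε(z)). Then for every t > 0 and a ∈ ℝ, the (total) derivative of G at the point (t, a, 0) is an injective linear map from ℝ³ to ℝ⁴. -/

import Mathlib

/-- `T(z) = -s + √(s² + z²)`, the time coordinate of the filament. -/
noncomputable def Tfil (s z : ℝ) : ℝ := -s + Real.sqrt (s ^ 2 + z ^ 2)

/-- `ε(z) = z / √(s² + z²) = T'(z)`. -/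
noncomputable def epsFil (s z : ℝ) : ℝ := z / Real.sqrt (s ^ 2 + z ^ 2)

/-- The angular parametrization `G(t, a, z)` of the projection of the future flowout
of the conormal bundle of the filament. -/
noncomputable def Gmap (s : ℝ) : ℝ × ℝ × ℝ → (Fin 4 → ℝ) := fun p =>
  ![Tfil s p.2.2 + p.1,
    p.1 * Real.sqrt (1 - epsFil s p.2.2 ^ 2) * Real.cos p.2.1,
    p.1 * Real.sqrt (1 - epsFil s p.2.2 ^ 2) * Real.sin p.2.1,
    p.2.2 + p.1 * epsFil s p.2.2]

/-- Appendix C of the paper: for `t > 0` the total derivative of `G` at `(t, a, 0)`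
exists and is an injective linear map `ℝ³ → ℝ⁴`. -/

lemma sqrt_s2 {s : ℝ} (hs : 0 < s) : Real.sqrt (s ^ 2 + 0 ^ 2) = s := by
  simp [Real.sqrt_sq hs.le]

lemma hr {s : ℝ} (hs : 0 < s) :
    HasDerivAt (fun z : ℝ => Real.sqrt (s ^ 2 + z ^ 2)) 0 0 := by
  have h : HasDerivAt (fun z : ℝ => s ^ 2 + z ^ 2) 0 0 := by
    simpa using ((hasDerivAt_pow 2 (0:ℝ)).const_add (s ^ 2))
  have := h.sqrt (by positivity)
  simpa using this

lemma heps {s : ℝ} (hs : 0 < s) : HasDerivAt (epsFil s) (1 / s) 0 := by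
  have h := (hasDerivAt_id (0:ℝ)).div (hr hs) (by rw [sqrt_s2 hs]; exact hs.ne')
  have h' : HasDerivAt (epsFil s)
      ((1 * Real.sqrt (s ^ 2 + 0 ^ 2) - id (0:ℝ) * 0) / Real.sqrt (s ^ 2 + 0 ^ 2) ^ 2) 0 := by
    exact h
  convert h' using 1
  rw [sqrt_s2 hs]; field_simp; ring

lemma eps0 (s : ℝ) : epsFil s 0 = 0 := by simp [epsFil]

lemma hsq {s : ℝ} (hs : 0 < s) :
    HasDerivAt (fun z : ℝ => Real.sqrt (1 - epsFil s z ^ 2)) 0 0 := by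
  have h : HasDerivAt (fun z : ℝ => 1 - epsFil s z ^ 2) 0 0 := by
    simpa [eps0] using (((heps hs).pow 2).const_sub 1)
  have := h.sqrt (by simp [eps0])
  simpa using this

lemma hT {s : ℝ} (hs : 0 < s) : HasDerivAt (Tfil s) 0 0 := (hr hs).const_add (-s)

theorem stmt_9 (s : ℝ) (hs : 0 < s) (t a : ℝ) (ht : 0 < t) :
    ∃ D : ℝ × ℝ × ℝ →L[ℝ] (Fin 4 → ℝ),
      HasFDerivAt (Gmap s) D (t, a, 0) ∧ Function.Injective D := by
  set x : ℝ × ℝ × ℝ := (t, a, 0) with hx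
  set A1 := ContinuousLinearMap.fst ℝ ℝ (ℝ × ℝ) with hA1
  set A2 := (ContinuousLinearMap.fst ℝ ℝ ℝ).comp (ContinuousLinearMap.snd ℝ ℝ (ℝ × ℝ)) with hA2
  set A3 := (ContinuousLinearMap.snd ℝ ℝ ℝ).comp (ContinuousLinearMap.snd ℝ ℝ (ℝ × ℝ)) with hA3
  have hp1 : HasFDerivAt (fun p : ℝ × ℝ × ℝ => p.1) A1 x := hasFDerivAt_fst
  have hp2 : HasFDerivAt (fun p : ℝ × ℝ × ℝ => p.2.1) A2 x :=
    hasFDerivAt_fst.comp x hasFDerivAt_snd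
  have hp3 : HasFDerivAt (fun p : ℝ × ℝ × ℝ => p.2.2) A3 x :=
    hasFDerivAt_snd.comp x hasFDerivAt_snd
  have hepsP : HasFDerivAt (fun p : ℝ × ℝ × ℝ => epsFil s p.2.2) ((1 / s) • A3) x :=
    (heps hs).comp_hasFDerivAt (h₂ := epsFil s) (f := fun p : ℝ × ℝ × ℝ => p.2.2) x hp3
  have hsqP : HasFDerivAt (fun p : ℝ × ℝ × ℝ => Real.sqrt (1 - epsFil s p.2.2 ^ 2))
      ((0 : ℝ) • A3) x := (hsq hs).comp_hasFDerivAt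
        (h₂ := fun z : ℝ => Real.sqrt (1 - epsFil s z ^ 2)) (f := fun p : ℝ × ℝ × ℝ => p.2.2) x hp3
  have hTP : HasFDerivAt (fun p : ℝ × ℝ × ℝ => Tfil s p.2.2) ((0 : ℝ) • A3) x :=
    (hT hs).comp_hasFDerivAt (h₂ := Tfil s) (f := fun p : ℝ × ℝ × ℝ => p.2.2) x hp3
  have hcos : HasFDerivAt (fun p : ℝ × ℝ × ℝ => Real.cos p.2.1) ((-Real.sin a) • A2) x :=
    (Real.hasDerivAt_cos a).comp_hasFDerivAt (h₂ := Real.cos) (f := fun p : ℝ × ℝ × ℝ => p.2.1) x hp2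
  have hsin : HasFDerivAt (fun p : ℝ × ℝ × ℝ => Real.sin p.2.1) ((Real.cos a) • A2) x :=
    (Real.hasDerivAt_sin a).comp_hasFDerivAt (h₂ := Real.sin) (f := fun p : ℝ × ℝ × ℝ => p.2.1) x hp2
  have h0 : HasFDerivAt (fun p : ℝ × ℝ × ℝ => Tfil s p.2.2 + p.1)
      ((0 : ℝ) • A3 + A1) x := hTP.add hp1
  have hm := hp1.mul hsqP
  have h1 := hm.mul hcos
  have h2 := hm.mul hsin
  have h3 := hp3.add (hp1.mul hepsP)
  have hG : HasFDerivAt (Gmap s) (ContinuousLinearMap.pi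
      ![(0 : ℝ) • A3 + A1,
        (t * Real.sqrt (1 - epsFil s (0:ℝ) ^ 2)) • (-Real.sin a) • A2 +
          Real.cos a • (t • (0 : ℝ) • A3 + Real.sqrt (1 - epsFil s (0:ℝ) ^ 2) • A1),
        (t * Real.sqrt (1 - epsFil s (0:ℝ) ^ 2)) • (Real.cos a) • A2 +
          Real.sin a • (t • (0 : ℝ) • A3 + Real.sqrt (1 - epsFil s (0:ℝ) ^ 2) • A1),
        A3 + (t • (1 / s) • A3 + epsFil s (0:ℝ) • A1)]) x := by
    apply hasFDerivAt_pi''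
    intro i
    fin_cases i <;>
      simp only [ContinuousLinearMap.proj_pi, Gmap, Matrix.cons_val_zero, Matrix.cons_val_one,
        Matrix.head_cons, Matrix.cons_val_two, Matrix.cons_val_three, Matrix.tail_cons,
        Fin.isValue]
    · exact h0
    · exact h1
    · exact h2
    · exact h3
  have hinj : Function.Injective (ContinuousLinearMap.pi
      ![(0 : ℝ) • A3 + A1,
        (t * Real.sqrt (1 - epsFil s (0:ℝ) ^ 2)) • (-Real.sin a) • A2 +
          Real.cos a • (t • (0 : ℝ) • A3 + Real.sqrt (1 - epsFil s (0:ℝ) ^ 2) • A1),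
        (t * Real.sqrt (1 - epsFil s (0:ℝ) ^ 2)) • (Real.cos a) • A2 +
          Real.sin a • (t • (0 : ℝ) • A3 + Real.sqrt (1 - epsFil s (0:ℝ) ^ 2) • A1),
        A3 + (t • (1 / s) • A3 + epsFil s (0:ℝ) • A1)] : ℝ × ℝ × ℝ →L[ℝ] (Fin 4 → ℝ)) := by
    rw [injective_iff_map_eq_zero]
    intro v hv
    have e0 := congrFun hv 0
    have e1 := congrFun hv 1
    have e2 := congrFun hv 2
    have e3 := congrFun hv 3
    simp only [ContinuousLinearMap.pi_apply, Matrix.cons_val_zero, Matrix.cons_val_one,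
      Matrix.head_cons, Matrix.cons_val_two, Matrix.cons_val_three, Matrix.tail_cons,
      ContinuousLinearMap.add_apply, ContinuousLinearMap.smul_apply,
      ContinuousLinearMap.comp_apply, ContinuousLinearMap.coe_fst', ContinuousLinearMap.coe_snd',
      hx, eps0, Pi.zero_apply, smul_eq_mul, ne_eq, OfNat.ofNat_ne_zero, not_false_eq_true,
      zero_pow, sub_zero, Real.sqrt_one, hA1, hA2, hA3, mul_one, one_mul, mul_zero,
      zero_mul, add_zero, zero_add, mul_neg, neg_mul] at e0 e1 e2 e3
    have hv1 : v.1 = 0 := by linear_combination e0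
    have hv3 : v.2.2 = 0 := by
      have hne : (s + t) ≠ 0 := by positivity
      have hz : (s + t) * v.2.2 = 0 := by
        field_simp at e3
        linear_combination e3
      exact (mul_eq_zero.mp hz).resolve_left hne
    have hv2 : v.2.1 = 0 := by
      have hz : t * v.2.1 = 0 := by
        linear_combination (-Real.sin a) * e1 + Real.cos a * e2 -
          (t * v.2.1) * (Real.sin_sq_add_cos_sq a)
      exact (mul_eq_zero.mp hz).resolve_left ht.ne'
    have : v = (v.1, v.2.1, v.2.2) := rfl
    rw [this, hv1, hv2, hv3]
    rfl
  exact ⟨_, hG, hinj⟩
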